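/- arXiv:math/9712221 — 5 statements merged into one kernel-verified Lean document; each statement's English description precedes it below -/
import Mathlib

section
/- Let F' be the free group on generators x_1,…,x_g and let F be the free group on generators x_1,…,x_g,y_1,…,y_g. Let δ : F' → F be the group homomorphism determined by δ(x_i) = [x_i, y_i] (the commutator of x_i and y_i in F). Then for every n ≥ 1, δ maps the n-th lower central series subgroup F'_n into the 2n-th lower central series subgroup F_{2n}; that is, if w ∈ F'_n then δ(w) ∈ F_{2n}. -/
open Subgroup

open scoped commutatorElement

/-- Three subgroups lemma, `≤ N` form for a normal subgroup `N`. -/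
lemma three_subgroups_le {G : Type*} [Group G] {A B C N : Subgroup G} [N.Normal]
    (h1 : ⁅⁅B, C⁆, A⁆ ≤ N) (h2 : ⁅⁅C, A⁆, B⁆ ≤ N) : ⁅⁅A, B⁆, C⁆ ≤ N := by
  let π := QuotientGroup.mk' N
  have key : ∀ {X Y Z : Subgroup G}, ⁅⁅X, Y⁆, Z⁆ ≤ N ↔ ⁅⁅X.map π, Y.map π⁆, Z.map π⁆ = ⊥ := by
    intro X Y Z
    rw [← Subgroup.map_commutator, ← Subgroup.map_commutator, Subgroup.map_eq_bot_iff,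
      QuotientGroup.ker_mk']
  rw [key]
  exact Subgroup.commutator_commutator_eq_bot_of_rotate (key.mp h1) (key.mp h2)

lemma lcs_commutator_le_lcs {G : Type*} [Group G] (k m : ℕ) :
    ⁅Subgroup.lowerCentralSeries (⊤ : Subgroup G) m, Subgroup.lowerCentralSeries (⊤ : Subgroup G) k⁆ ≤ Subgroup.lowerCentralSeries (⊤ : Subgroup G) (m + k + 1) := by
  induction k generalizing m with
  | zero =>
      show ⁅Subgroup.lowerCentralSeries (⊤ : Subgroup G) m, (⊤ : Subgroup G)⁆ ≤ Subgroup.lowerCentralSeries (⊤ : Subgroup G) (m + 1)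
      exact le_of_eq rfl
  | succ k ih =>
      show ⁅Subgroup.lowerCentralSeries (⊤ : Subgroup G) m, ⁅Subgroup.lowerCentralSeries (⊤ : Subgroup G) k, ⊤⁆⁆ ≤
        Subgroup.lowerCentralSeries (⊤ : Subgroup G) (m + (k + 1) + 1)
      rw [Subgroup.commutator_comm]
      refine three_subgroups_le ?_ ?_
      · -- ⁅⁅⊤, lcs m⁆, lcs k⁆ ≤ lcs (m+k+2)
        rw [Subgroup.commutator_comm (⊤ : Subgroup G)]
        have : ⁅Subgroup.lowerCentralSeries (⊤ : Subgroup G) (m + 1), Subgroup.lowerCentralSeries (⊤ : Subgroup G) k⁆ ≤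
            Subgroup.lowerCentralSeries (⊤ : Subgroup G) (m + 1 + k + 1) := ih (m + 1)
        calc ⁅(⁅Subgroup.lowerCentralSeries (⊤ : Subgroup G) m, ⊤⁆ : Subgroup G), Subgroup.lowerCentralSeries (⊤ : Subgroup G) k⁆
            = ⁅Subgroup.lowerCentralSeries (⊤ : Subgroup G) (m + 1), Subgroup.lowerCentralSeries (⊤ : Subgroup G) k⁆ := rfl
          _ ≤ Subgroup.lowerCentralSeries (⊤ : Subgroup G) (m + 1 + k + 1) := this
          _ = Subgroup.lowerCentralSeries (⊤ : Subgroup G) (m + (k + 1) + 1) := by ring_nf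
      · -- ⁅⁅lcs m, lcs k⁆, ⊤⁆ ≤ lcs (m+k+2)
        calc ⁅(⁅Subgroup.lowerCentralSeries (⊤ : Subgroup G) m, Subgroup.lowerCentralSeries (⊤ : Subgroup G) k⁆ : Subgroup G), ⊤⁆
            ≤ ⁅Subgroup.lowerCentralSeries (⊤ : Subgroup G) (m + k + 1), ⊤⁆ := Subgroup.commutator_mono (ih m) le_rfl
          _ = Subgroup.lowerCentralSeries (⊤ : Subgroup G) (m + k + 1 + 1) := rfl
          _ = Subgroup.lowerCentralSeries (⊤ : Subgroup G) (m + (k + 1) + 1) := by ring_nf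

/-- `F'` is the free group on `x_1, …, x_g` (indexed by `Fin g`), `F` is the free group on
`x_1, …, x_g, y_1, …, y_g` (indexed by `Fin g ⊕ Fin g`, with `Sum.inl i` corresponding to `x_i`
and `Sum.inr i` to `y_i`).  `δ : F' → F` is the homomorphism with `δ(x_i) = [x_i, y_i]`.
Here `lowerCentralSeries G n` is the `(n+1)`-st term `G_{n+1}` of the lower central series in
the paper's indexing (`G_1 = G`, `G_{q+1} = [G, G_q]`).  The statement: if `w ∈ F'_{n+1}` then
`δ(w) ∈ F_{2(n+1)}`, i.e. `δ` maps `lowerCentralSeries F' n` into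
`lowerCentralSeries F (2*n+1)`. -/
theorem delta_maps_lcs_into_double (g : ℕ) (n : ℕ)
    (δ : FreeGroup (Fin g) →* FreeGroup (Fin g ⊕ Fin g))
    (hδ : ∀ i : Fin g, δ (FreeGroup.of i) =
      ⁅FreeGroup.of (Sum.inl i : Fin g ⊕ Fin g), FreeGroup.of (Sum.inr i : Fin g ⊕ Fin g)⁆)
    (w : FreeGroup (Fin g)) (hw : w ∈ (⊤ : Subgroup (FreeGroup (Fin g))).lowerCentralSeries n) :
    δ w ∈ (⊤ : Subgroup (FreeGroup (Fin g ⊕ Fin g))).lowerCentralSeries (2 * n + 1) := by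
  set F' := FreeGroup (Fin g)
  set F := FreeGroup (Fin g ⊕ Fin g)
  -- range of δ lies in the commutator subgroup
  have hrange : Subgroup.map δ ⊤ ≤ Subgroup.lowerCentralSeries (⊤ : Subgroup F) 1 := by
    rw [Subgroup.map_le_iff_le_comap, ← FreeGroup.closure_range_of (Fin g), Subgroup.closure_le]
    rintro _ ⟨i, rfl⟩
    simp only [Subgroup.coe_comap, Set.mem_preimage, SetLike.mem_coe, hδ i]
    exact Subgroup.commutator_mem_commutator (Subgroup.mem_top _) (Subgroup.mem_top _)
  have main : ∀ m : ℕ, Subgroup.map δ (Subgroup.lowerCentralSeries (⊤ : Subgroup F') m) ≤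
      Subgroup.lowerCentralSeries (⊤ : Subgroup F) (2 * m + 1) := by
    intro m
    induction m with
    | zero => simpa using hrange
    | succ m ih =>
        calc Subgroup.map δ (Subgroup.lowerCentralSeries (⊤ : Subgroup F') (m + 1))
            = Subgroup.map δ ⁅Subgroup.lowerCentralSeries (⊤ : Subgroup F') m, ⊤⁆ := rfl
          _ = ⁅Subgroup.map δ (Subgroup.lowerCentralSeries (⊤ : Subgroup F') m), Subgroup.map δ ⊤⁆ :=
              Subgroup.map_commutator _ _ δ
          _ ≤ ⁅Subgroup.lowerCentralSeries (⊤ : Subgroup F) (2 * m + 1), Subgroup.lowerCentralSeries (⊤ : Subgroup F) 1⁆ :=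
              Subgroup.commutator_mono ih hrange
          _ ≤ Subgroup.lowerCentralSeries (⊤ : Subgroup F) (2 * m + 1 + 1 + 1) := lcs_commutator_le_lcs 1 (2 * m + 1)
          _ = Subgroup.lowerCentralSeries (⊤ : Subgroup F) (2 * (m + 1) + 1) := by ring_nf
  exact main n (Subgroup.mem_map_of_mem δ hw)
end

section
/- Let H be a free ℤ-module with basis x_1,…,x_g,y_1,…,y_g and let L ⊆ H be the submodule spanned by x_1,…,x_g. For 0 ≤ m ≤ 3 let K_m ⊆ Λ³H be the subgroup generated by all elements h_1 ∧ h_2 ∧ h_3 in which at least m of the h_i lie in L, and set K_4 = 0. Let f : H → H be a ℤ-linear map such that f(x) = x for every x ∈ L and f(h) − h ∈ L for every h ∈ H. Then the induced map Λ³f on Λ³H satisfies (Λ³f − id)(K_m) ⊆ K_{m+1} for every m with 0 ≤ m ≤ 3 (where K_0 = Λ³H and K_3 = Λ³L). -/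
open ExteriorAlgebra

/-- The wedge `v 0 ∧ ⋯ ∧ v (n-1)` in the `n`-th exterior power `⋀[ℤ]^n M`. -/
noncomputable def wedge {M : Type*} [AddCommGroup M] [Module ℤ M] (n : ℕ) (v : Fin n → M) :
    ⋀[ℤ]^n M :=
  ⟨ιMulti ℤ n v, ιMulti_range ℤ n (Set.mem_range_self v)⟩

/-- `H` is free with basis `x_1,…,x_g,y_1,…,y_g` (indexed by `Fin g ⊕ Fin g`), `L` is the span
of the `x_i`.  `K m ⊆ Λ³H` is the subgroup generated by wedges `h₁ ∧ h₂ ∧ h₃` with at least `m`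
of the `h_i` in `L` (so `K 0 = Λ³H`, `K 3 = Λ³L`, and `K 4 = 0` since the generating set is
then empty).  If `f : H → H` is ℤ-linear, the identity on `L`, with `f h - h ∈ L` for all `h`,
and `F = Λ³f` is the induced map on `Λ³H`, then `(Λ³f - id)(K m) ⊆ K (m+1)` for `m ≤ 3`. -/
theorem lambda3_sub_id_maps_K (g : ℕ) (H : Type) [AddCommGroup H] [Module ℤ H]
    (b : Module.Basis (Fin g ⊕ Fin g) ℤ H)
    (L : Submodule ℤ H)
    (hL : L = Submodule.span ℤ (Set.range fun i : Fin g => b (Sum.inl i)))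
    (K : ℕ → Submodule ℤ (⋀[ℤ]^3 H))
    (hK : ∀ m, K m = Submodule.span ℤ {w : ⋀[ℤ]^3 H | ∃ v : Fin 3 → H,
      (∃ s : Finset (Fin 3), m ≤ s.card ∧ ∀ i ∈ s, v i ∈ L) ∧ w = wedge 3 v})
    (f : H →ₗ[ℤ] H)
    (hf₁ : ∀ x ∈ L, f x = x)
    (hf₂ : ∀ h : H, f h - h ∈ L)
    (F : (⋀[ℤ]^3 H) →ₗ[ℤ] (⋀[ℤ]^3 H))
    (hF : ∀ v : Fin 3 → H, F (wedge 3 v) = wedge 3 (f ∘ v))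
    (m : ℕ) (hm : m ≤ 3) :
    ∀ w ∈ K m, F w - w ∈ K (m + 1) := by
  intro w hw
  rw [hK m] at hw
  induction hw using Submodule.span_induction with
  | zero => simpa using (K (m+1)).zero_mem
  | add x y hx hy ihx ihy =>
      have : F (x + y) - (x + y) = (F x - x) + (F y - y) := by
        rw [map_add]; abel
      rw [this]; exact (K (m+1)).add_mem ihx ihy
  | smul c x hx ih =>
      have : F (c • x) - c • x = c • (F x - x) := by
        rw [map_smul]; exact (smul_sub c (F x) x).symm
      rw [this]; exact (K (m+1)).smul_mem c ih
  | mem w hwmem =>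
      obtain ⟨v, ⟨s, hsc, hvL⟩, rfl⟩ := hwmem
      classical
      set d : Fin 3 → H := fun i => f (v i) - v i with hd
      have hdL : ∀ i, d i ∈ L := fun i => hf₂ (v i)
      have hfv : (f ∘ v : Fin 3 → H) = d + v := by
        funext i; simp [hd]
      -- the key expansion
      have key : F (wedge 3 v) - wedge 3 v =
          ∑ T ∈ (Finset.univ : Finset (Finset (Fin 3))).erase ∅,
            wedge 3 (T.piecewise d v) := by
        rw [hF v, hfv]
        apply Subtype.ext
        have expand : (ιMulti ℤ 3 (M := H)) (d + v)
            = ∑ T : Finset (Fin 3), ιMulti ℤ 3 (T.piecewise d v) :=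
          (ιMulti ℤ 3 (M := H)).toMultilinearMap.map_add_univ d v
        have hsplit := Finset.add_sum_erase (Finset.univ : Finset (Finset (Fin 3)))
          (fun T => ιMulti ℤ 3 (T.piecewise d v)) (Finset.mem_univ ∅)
        simp only [Finset.piecewise_empty] at hsplit
        push_cast [wedge]
        rw [expand, ← hsplit]
        abel
      rw [key]
      apply Submodule.sum_mem
      intro T hT
      rw [Finset.mem_erase] at hT
      rw [hK (m+1)]
      by_cases hTs : T ⊆ s
      · -- some coordinate is 0, so the wedge is 0
        obtain ⟨i, hi⟩ := Finset.nonempty_iff_ne_empty.2 hT.1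
        have h0 : T.piecewise d v i = 0 := by
          have : v i ∈ L := hvL i (hTs hi)
          simp [Finset.piecewise_eq_of_mem _ _ _ hi, hd, hf₁ _ this]
        have : wedge 3 (T.piecewise d v) = 0 := by
          apply Subtype.ext
          have h1 : (ιMulti ℤ 3 (M := H)) (T.piecewise d v) = 0 :=
            (ιMulti ℤ 3 (M := H)).toMultilinearMap.map_coord_zero i h0
          simpa [wedge] using h1
        rw [this]; exact Submodule.zero_mem _
      · obtain ⟨i, hiT, his⟩ := Finset.not_subset.1 hTs
        apply Submodule.subset_span
        refine ⟨T.piecewise d v, ⟨s ∪ T, ?_, ?_⟩, rfl⟩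
        · calc m + 1 ≤ s.card + 1 := by omega
            _ = (insert i s).card := (Finset.card_insert_of_notMem his).symm
            _ ≤ (s ∪ T).card := Finset.card_le_card (by
                intro j hj
                rcases Finset.mem_insert.1 hj with rfl | hj
                · exact Finset.mem_union_right _ hiT
                · exact Finset.mem_union_left _ hj)
        · intro j hj
          by_cases hjT : j ∈ T
          · rw [Finset.piecewise_eq_of_mem _ _ _ hjT]; exact hdL j
          · rw [Finset.piecewise_eq_of_notMem _ _ _ hjT]
            exact hvL j ((Finset.mem_union.1 hj).resolve_right hjT)
end

section
/- Let H be a free ℤ-module with symplectic basis x_1,…,x_g,y_1,…,y_g (so x_i·x_j = y_i·y_j = 0 and x_i·y_j = δ_{ij} for the intersection pairing) and let L ⊆ H be the Lagrangian submodule spanned by x_1,…,x_g. Let p : Λ³H → Λ³(H/L) be the map induced by the projection H → H/L, and let c : Λ³H → H/L be the composition of the contraction h_1 ∧ h_2 ∧ h_3 ↦ (h_1·h_2)h_3 + (h_2·h_3)h_1 + (h_3·h_1)h_2 with the projection H → H/L. Then the kernel K of p ⊕ c : Λ³H → Λ³(H/L) ⊕ H/L equals the subgroup of Λ³H generated by the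 following elements: (1) x_i ∧ x_j ∧ x_k for any i, j, k; (2) x_i ∧ x_j ∧ y_k for any i, j, k; (3) x_i ∧ y_j ∧ y_k for i, j, k distinct; (4) y_i ∧ x_i ∧ y_k + x_j ∧ y_j ∧ y_k for i, j, k distinct. -/
open ExteriorAlgebra

section Generic

variable (R : Type*) [CommRing R] {M : Type*} [AddCommGroup M] [Module R M]

/-- The wedge as an alternating map into the exterior power. -/
noncomputable def wedgeA (n : ℕ) : M [⋀^Fin n]→ₗ[R] ⋀[R]^n M :=
  (ιMulti R n).codRestrict _ (fun v => ιMulti_range R n (Set.mem_range_self v))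

lemma span_wedgeA_eq_top :
    Submodule.span R (Set.range (wedgeA R (M := M) 3)) = ⊤ := by
  apply Submodule.map_injective_of_injective (Submodule.injective_subtype (⋀[R]^3 M))
  rw [Submodule.map_span, Submodule.map_top, Submodule.range_subtype]
  conv_rhs => rw [← ιMulti_span_fixedDegree R 3]
  congr 1
  rw [← Set.range_comp]
  rfl

lemma wedgeA_mem_span_basis {ι : Type*} [Fintype ι] [DecidableEq ι] (b : Module.Basis ι R M)
    (v : Fin 3 → M) :
    wedgeA R 3 v ∈ Submodule.span R {w : ⋀[R]^3 M | ∃ σ : Fin 3 → ι, w = wedgeA R 3 (b ∘ σ)} := by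
  have h0 : wedgeA R 3 v =
      (wedgeA R (M := M) 3).toMultilinearMap (fun i => ∑ j, b.repr (v i) j • b j) := by
    exact DFunLike.congr_arg (wedgeA R (M := M) 3).toMultilinearMap
      (funext fun i => (b.sum_repr (v i)).symm)
  rw [h0, (wedgeA R (M := M) 3).toMultilinearMap.map_sum]
  refine Submodule.sum_mem _ fun σ _ => ?_
  rw [(wedgeA R (M := M) 3).toMultilinearMap.map_smul_univ]
  exact Submodule.smul_mem _ _ (Submodule.subset_span ⟨σ, rfl⟩)

end Generic

section IntVersions

variable {M : Type*} [AddCommGroup M] [Module ℤ M]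

lemma wedge_eq_wedgeA (n : ℕ) (v : Fin n → M) : wedge n v = wedgeA ℤ n v := rfl

lemma wedge_swap (v : Fin 3 → M) {i j : Fin 3} (h : i ≠ j) :
    wedge 3 (v ∘ Equiv.swap i j) = - wedge 3 v := by
  rw [wedge_eq_wedgeA, wedge_eq_wedgeA]
  exact (wedgeA ℤ (M := M) 3).map_swap v h

lemma wedge_coord_zero (v : Fin 3 → M) (i : Fin 3) (h : v i = 0) : wedge 3 v = 0 := by
  rw [wedge_eq_wedgeA]
  exact (wedgeA ℤ (M := M) 3).map_coord_zero i h

lemma wedge_eq_zero_of_eq (v : Fin 3 → M) {i j : Fin 3} (hv : v i = v j) (h : i ≠ j) :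
    wedge 3 v = 0 := by
  rw [wedge_eq_wedgeA]
  exact (wedgeA ℤ (M := M) 3).map_eq_zero_of_eq v hv h

lemma span_wedge_eq_top :
    Submodule.span ℤ (Set.range (wedge (M := M) 3)) = ⊤ := by
  rw [show wedge (M := M) 3 = wedgeA ℤ 3 from rfl]
  exact span_wedgeA_eq_top ℤ

lemma wedge_mem_span_basis {ι : Type*} [Fintype ι] [DecidableEq ι] (b : Module.Basis ι ℤ M)
    (v : Fin 3 → M) :
    wedge 3 v ∈ Submodule.span ℤ {w : ⋀[ℤ]^3 M | ∃ σ : Fin 3 → ι, w = wedge 3 (b ∘ σ)} := by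
  exact wedgeA_mem_span_basis ℤ b v

lemma wedge_swap01 (a₁ a₂ a₃ : M) : wedge 3 ![a₂, a₁, a₃] = - wedge 3 ![a₁, a₂, a₃] := by
  have h := wedge_swap ![a₁, a₂, a₃] (show (0 : Fin 3) ≠ 1 by decide)
  rw [show (![a₁, a₂, a₃] ∘ Equiv.swap (0 : Fin 3) 1) = ![a₂, a₁, a₃] from by
    funext t; fin_cases t <;> simp [Equiv.swap_apply_def]] at h
  exact h

lemma wedge_swap12 (a₁ a₂ a₃ : M) : wedge 3 ![a₁, a₃, a₂] = - wedge 3 ![a₁, a₂, a₃] := by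
  have h := wedge_swap ![a₁, a₂, a₃] (show (1 : Fin 3) ≠ 2 by decide)
  rw [show (![a₁, a₂, a₃] ∘ Equiv.swap (1 : Fin 3) 2) = ![a₁, a₃, a₂] from by
    funext t; fin_cases t <;> simp [Equiv.swap_apply_def]] at h
  exact h

lemma wedge_swap02 (a₁ a₂ a₃ : M) : wedge 3 ![a₃, a₂, a₁] = - wedge 3 ![a₁, a₂, a₃] := by
  have h := wedge_swap ![a₁, a₂, a₃] (show (0 : Fin 3) ≠ 2 by decide)
  rw [show (![a₁, a₂, a₃] ∘ Equiv.swap (0 : Fin 3) 2) = ![a₃, a₂, a₁] from by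
    funext t; fin_cases t <;> simp [Equiv.swap_apply_def]] at h
  exact h

end IntVersions

set_option maxHeartbeats 1000000 in
/-- `H` is free with symplectic basis `x_1,…,x_g,y_1,…,y_g` (indexed by `Fin g ⊕ Fin g`) for the
intersection pairing `ω` (`x_i·x_j = y_i·y_j = 0`, `x_i·y_j = δ_{ij} = -(y_j·x_i)`), and `L` is
the Lagrangian spanned by the `x_i`.  `p : Λ³H → Λ³(H/L)` is induced by the projection
`H → H/L` and `c : Λ³H → H/L` is the contraction
`h₁∧h₂∧h₃ ↦ (h₁·h₂)h₃ + (h₂·h₃)h₁ + (h₃·h₁)h₂` followed by the projection.  Then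
`K = ker(p ⊕ c)` is the subgroup of `Λ³H` generated by the elements
(1) `x_i ∧ x_j ∧ x_k`; (2) `x_i ∧ x_j ∧ y_k`; (3) `x_i ∧ y_j ∧ y_k` for `i, j, k` distinct;
(4) `y_i ∧ x_i ∧ y_k + x_j ∧ y_j ∧ y_k` for `i, j, k` distinct. -/
theorem ker_p_oplus_c_eq_span (g : ℕ) (H : Type) [AddCommGroup H] [Module ℤ H]
    (b : Module.Basis (Fin g ⊕ Fin g) ℤ H)
    (L : Submodule ℤ H)
    (hL : L = Submodule.span ℤ (Set.range fun i : Fin g => b (Sum.inl i)))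
    (ω : H →ₗ[ℤ] H →ₗ[ℤ] ℤ)
    (hxx : ∀ i j : Fin g, ω (b (Sum.inl i)) (b (Sum.inl j)) = 0)
    (hyy : ∀ i j : Fin g, ω (b (Sum.inr i)) (b (Sum.inr j)) = 0)
    (hxy : ∀ i j : Fin g, ω (b (Sum.inl i)) (b (Sum.inr j)) = if i = j then 1 else 0)
    (hyx : ∀ i j : Fin g, ω (b (Sum.inr i)) (b (Sum.inl j)) = if i = j then -1 else 0)
    (p : (⋀[ℤ]^3 H) →ₗ[ℤ] (⋀[ℤ]^3 (H ⧸ L)))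
    (hp : ∀ v : Fin 3 → H, p (wedge 3 v) = wedge 3 (⇑L.mkQ ∘ v))
    (c : (⋀[ℤ]^3 H) →ₗ[ℤ] H ⧸ L)
    (hc : ∀ v : Fin 3 → H, c (wedge 3 v) =
      L.mkQ ((ω (v 0) (v 1)) • v 2 + (ω (v 1) (v 2)) • v 0 + (ω (v 2) (v 0)) • v 1)) :
    LinearMap.ker (p.prod c) = Submodule.span ℤ
      ({w : ⋀[ℤ]^3 H | ∃ i j k : Fin g,
          w = wedge 3 ![b (Sum.inl i), b (Sum.inl j), b (Sum.inl k)]} ∪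
       {w : ⋀[ℤ]^3 H | ∃ i j k : Fin g,
          w = wedge 3 ![b (Sum.inl i), b (Sum.inl j), b (Sum.inr k)]} ∪
       {w : ⋀[ℤ]^3 H | ∃ i j k : Fin g, i ≠ j ∧ j ≠ k ∧ i ≠ k ∧
          w = wedge 3 ![b (Sum.inl i), b (Sum.inr j), b (Sum.inr k)]} ∪
       {w : ⋀[ℤ]^3 H | ∃ i j k : Fin g, i ≠ j ∧ j ≠ k ∧ i ≠ k ∧
          w = wedge 3 ![b (Sum.inr i), b (Sum.inl i), b (Sum.inr k)] +
              wedge 3 ![b (Sum.inl j), b (Sum.inr j), b (Sum.inr k)]}) := by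
  classical
  set S : Submodule ℤ (⋀[ℤ]^3 H) := Submodule.span ℤ
      ({w : ⋀[ℤ]^3 H | ∃ i j k : Fin g,
          w = wedge 3 ![b (Sum.inl i), b (Sum.inl j), b (Sum.inl k)]} ∪
       {w : ⋀[ℤ]^3 H | ∃ i j k : Fin g,
          w = wedge 3 ![b (Sum.inl i), b (Sum.inl j), b (Sum.inr k)]} ∪
       {w : ⋀[ℤ]^3 H | ∃ i j k : Fin g, i ≠ j ∧ j ≠ k ∧ i ≠ k ∧
          w = wedge 3 ![b (Sum.inl i), b (Sum.inr j), b (Sum.inr k)]} ∪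
       {w : ⋀[ℤ]^3 H | ∃ i j k : Fin g, i ≠ j ∧ j ≠ k ∧ i ≠ k ∧
          w = wedge 3 ![b (Sum.inr i), b (Sum.inl i), b (Sum.inr k)] +
              wedge 3 ![b (Sum.inl j), b (Sum.inr j), b (Sum.inr k)]}) with hSdef
  -- membership helpers
  have hS1 : ∀ i j k : Fin g,
      wedge 3 ![b (Sum.inl i), b (Sum.inl j), b (Sum.inl k)] ∈ S :=
    fun i j k => Submodule.subset_span (Or.inl (Or.inl (Or.inl ⟨i, j, k, rfl⟩)))
  have hS2 : ∀ i j k : Fin g,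
      wedge 3 ![b (Sum.inl i), b (Sum.inl j), b (Sum.inr k)] ∈ S :=
    fun i j k => Submodule.subset_span (Or.inl (Or.inl (Or.inr ⟨i, j, k, rfl⟩)))
  have hS3 : ∀ i j k : Fin g, i ≠ j → j ≠ k → i ≠ k →
      wedge 3 ![b (Sum.inl i), b (Sum.inr j), b (Sum.inr k)] ∈ S :=
    fun i j k hij hjk hik => Submodule.subset_span (Or.inl (Or.inr ⟨i, j, k, hij, hjk, hik, rfl⟩))
  have hS4 : ∀ i j k : Fin g, i ≠ j → j ≠ k → i ≠ k →
      wedge 3 ![b (Sum.inr i), b (Sum.inl i), b (Sum.inr k)] +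
        wedge 3 ![b (Sum.inl j), b (Sum.inr j), b (Sum.inr k)] ∈ S :=
    fun i j k hij hjk hik => Submodule.subset_span (Or.inr ⟨i, j, k, hij, hjk, hik, rfl⟩)
  have hxL : ∀ i : Fin g, b (Sum.inl i) ∈ L := fun i => by
    rw [hL]; exact Submodule.subset_span ⟨i, rfl⟩
  have hmkx : ∀ i : Fin g, L.mkQ (b (Sum.inl i)) = 0 := fun i => by
    rw [Submodule.mkQ_apply]; exact (Submodule.Quotient.mk_eq_zero L).2 (hxL i)
  have hcv : ∀ u1 u2 u3 : H, c (wedge 3 ![u1, u2, u3]) =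
      L.mkQ ((ω u1 u2) • u3 + (ω u2 u3) • u1 + (ω u3 u1) • u2) := by
    intro u1 u2 u3
    rw [hc ![u1, u2, u3]]
    norm_num
    rfl
  -- S is contained in the kernel
  have hSker : S ≤ LinearMap.ker (p.prod c) := by
    rw [hSdef]
    refine Submodule.span_le.2 ?_
    rintro w hw
    simp only [SetLike.mem_coe, LinearMap.mem_ker, LinearMap.prod_apply, Function.prod, Prod.mk_eq_zero]
    obtain ((⟨i, j, k, rfl⟩ | ⟨i, j, k, rfl⟩) | ⟨i, j, k, hij, hjk, hik, rfl⟩) |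
      ⟨i, j, k, hij, hjk, hik, rfl⟩ := hw
    · constructor
      · rw [hp]; exact wedge_coord_zero _ 0 (by simp [hmkx])
      · rw [hcv, hxx i j, hxx j k, hxx k i]; simp [zero_zsmul]
    · constructor
      · rw [hp]; exact wedge_coord_zero _ 0 (by simp [hmkx])
      · rw [hcv, hxx i j, hxy j k, hyx k i, Submodule.mkQ_apply,
          Submodule.Quotient.mk_eq_zero]
        refine add_mem (add_mem ?_ ?_) ?_
        · rw [zero_zsmul]; exact zero_mem L
        · exact zsmul_mem (hxL i) _
        · exact zsmul_mem (hxL j) _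
    · constructor
      · rw [hp]; exact wedge_coord_zero _ 0 (by simp [hmkx])
      · rw [hcv, hxy i j, hyy j k, hyx k i, if_neg hij, if_neg (Ne.symm hik)]
        simp [zero_zsmul]
    · constructor
      · rw [map_add, hp, hp, wedge_coord_zero _ 1 (by simp [hmkx]),
          wedge_coord_zero _ 0 (by simp [hmkx]), add_zero]
      · rw [map_add, hcv, hcv, hyx i i, hxy i k, hyy k i, hxy j j, hyy j k, hyx k j,
          if_pos rfl, if_pos rfl, if_neg hik, if_neg (Ne.symm hjk)]
        rw [← map_add]
        simp [zero_zsmul, one_zsmul]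
  -- the section π, the lift jq, and the operators E and Ψ
  let π : H →ₗ[ℤ] H := b.constr ℕ (Sum.elim (fun _ => (0 : H)) (fun i => b (Sum.inr i)))
  have hπl : ∀ i, π (b (Sum.inl i)) = 0 := fun i => b.constr_basis ℕ _ (Sum.inl i)
  have hπr : ∀ i, π (b (Sum.inr i)) = b (Sum.inr i) := fun i => b.constr_basis ℕ _ (Sum.inr i)
  have hπL : L ≤ LinearMap.ker π := by
    rw [hL]
    refine Submodule.span_le.2 ?_
    rintro _ ⟨i, rfl⟩
    simpa [LinearMap.mem_ker] using hπl i
  let jq : (H ⧸ L) →ₗ[ℤ] H := { toFun := L.liftQ π hπL, map_add' := map_add _, map_smul' := fun r x => by simp; exact (int_smul_eq_zsmul (M := H) _ r _).symm }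
  have hjmk : ∀ h : H, jq (L.mkQ h) = π h := fun h => rfl
  let fam : ∀ n : ℕ, (H ⧸ L) [⋀^Fin n]→ₗ[ℤ] ⋀[ℤ]^3 H :=
    Function.update (fun n => 0) 3 ((wedgeA ℤ (M := H) 3).compLinearMap jq)
  let G : (⋀[ℤ]^3 (H ⧸ L)) →ₗ[ℤ] ⋀[ℤ]^3 H :=
    (ExteriorAlgebra.liftAlternating fam).comp (Submodule.subtype _)
  have hG : ∀ u : Fin 3 → H ⧸ L, G (wedge 3 u) = wedge 3 (fun t => jq (u t)) := by
    intro u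
    have h1 : G (wedge 3 u) = ExteriorAlgebra.liftAlternating fam (ιMulti ℤ 3 u) := rfl
    rw [h1, ExteriorAlgebra.liftAlternating_apply_ιMulti]
    rw [show fam 3 = (wedgeA ℤ (M := H) 3).compLinearMap jq from Function.update_self 3 _ _]
    rfl
  let E : (⋀[ℤ]^3 H) →ₗ[ℤ] ⋀[ℤ]^3 H := G.comp p
  have hE : ∀ v : Fin 3 → H, E (wedge 3 v) = wedge 3 (fun t => π (v t)) := by
    intro v
    show G (p (wedge 3 v)) = _
    rw [hp, hG]
    exact congrArg _ (funext fun t => hjmk (v t))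
  let uu : Fin g → ⋀[ℤ]^3 H := fun m =>
    if h : ∃ t : Fin g, t ≠ m then
      wedge 3 ![b (Sum.inl h.choose), b (Sum.inr h.choose), b (Sum.inr m)] else 0
  let Φ : H →ₗ[ℤ] ⋀[ℤ]^3 H := b.constr ℕ (Sum.elim (fun _ => 0) uu)
  have hΦr : ∀ m, Φ (b (Sum.inr m)) = uu m := fun m => b.constr_basis ℕ _ (Sum.inr m)
  let Ψ : (⋀[ℤ]^3 H) →ₗ[ℤ] ⋀[ℤ]^3 H := Φ.comp (jq.comp c)
  -- the complementary submodules
  set Vy : Submodule ℤ (⋀[ℤ]^3 H) := Submodule.span ℤ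
      {w : ⋀[ℤ]^3 H | ∃ σ : Fin 3 → Fin g, w = wedge 3 (fun t => b (Sum.inr (σ t)))} with hVydef
  set Vf : Submodule ℤ (⋀[ℤ]^3 H) := Submodule.span ℤ
      {w : ⋀[ℤ]^3 H | ∃ t m : Fin g, t ≠ m ∧
        w = wedge 3 ![b (Sum.inl t), b (Sum.inr t), b (Sum.inr m)]} with hVfdef
  have key3 : ∀ i j k : Fin g,
      wedge 3 ![b (Sum.inl i), b (Sum.inr j), b (Sum.inr k)] ∈ S ⊔ Vf := by
    intro i j k
    by_cases hjk : j = k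
    · subst hjk
      rw [wedge_eq_zero_of_eq ![b (Sum.inl i), b (Sum.inr j), b (Sum.inr j)]
        (i := 1) (j := 2) (by rfl) (by decide)]
      exact zero_mem _
    by_cases hij : i = j
    · subst hij
      exact Submodule.mem_sup_right (Submodule.subset_span ⟨i, k, hjk, rfl⟩)
    by_cases hik : i = k
    · subst hik
      rw [wedge_swap12 (b (Sum.inl i)) (b (Sum.inr i)) (b (Sum.inr j))]
      exact neg_mem (Submodule.mem_sup_right
        (Submodule.subset_span ⟨i, j, hij, rfl⟩))
    · exact Submodule.mem_sup_left (hS3 i j k hij hjk hik)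
  have hcase : ∀ σ : Fin 3 → Fin g ⊕ Fin g, wedge 3 (⇑b ∘ σ) ∈ S ⊔ Vy ⊔ Vf := by
    intro σ
    have hSle : S ≤ S ⊔ Vy ⊔ Vf := le_trans le_sup_left le_sup_left
    have hVyle : Vy ≤ S ⊔ Vy ⊔ Vf := le_trans le_sup_right le_sup_left
    have hVfle : Vf ≤ S ⊔ Vy ⊔ Vf := le_sup_right
    have hSVf : S ⊔ Vf ≤ S ⊔ Vy ⊔ Vf := sup_le hSle hVfle
    have hbσ : ⇑b ∘ σ = ![b (σ 0), b (σ 1), b (σ 2)] := by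
      funext t; fin_cases t <;> rfl
    rw [hbσ]
    obtain i | i := σ 0 <;> obtain j | j := σ 1 <;> obtain k | k := σ 2
    · exact hSle (hS1 i j k)
    · exact hSle (hS2 i j k)
    · rw [wedge_swap12 (b (Sum.inl i)) (b (Sum.inl k)) (b (Sum.inr j))]
      exact neg_mem (hSle (hS2 i k j))
    · exact hSVf (key3 i j k)
    · rw [wedge_swap02 (b (Sum.inl k)) (b (Sum.inl j)) (b (Sum.inr i))]
      exact neg_mem (hSle (hS2 k j i))
    · rw [wedge_swap01 (b (Sum.inl j)) (b (Sum.inr i)) (b (Sum.inr k))]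
      exact neg_mem (hSVf (key3 j i k))
    · rw [wedge_swap02 (b (Sum.inl k)) (b (Sum.inr j)) (b (Sum.inr i))]
      exact neg_mem (hSVf (key3 k j i))
    · refine hVyle (Submodule.subset_span ⟨![i, j, k], ?_⟩)
      exact congrArg _ (by funext t; fin_cases t <;> rfl)
  have hdec : ∀ w : ⋀[ℤ]^3 H, w ∈ S ⊔ Vy ⊔ Vf := by
    intro w
    have h1 : w ∈ Submodule.span ℤ (Set.range (wedge (M := H) 3)) := by
      rw [span_wedge_eq_top]; exact Submodule.mem_top
    refine Submodule.span_le.2 ?_ h1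
    rintro _ ⟨v, rfl⟩
    refine Submodule.span_le.2 ?_ (wedge_mem_span_basis b v)
    rintro _ ⟨σ, rfl⟩
    exact hcase σ
  -- E fixes Vy
  have hEVy : ∀ v ∈ Vy, E v = v := by
    intro v hv
    rw [hVydef] at hv
    refine Submodule.span_induction (p := fun x _ => E x = x) ?_ ?_ ?_ ?_ hv
    · rintro w ⟨σ, rfl⟩
      rw [hE]
      exact congrArg _ (funext fun t => hπr (σ t))
    · exact map_zero E
    · intro a a' _ _ ha ha'; rw [map_add, ha, ha']
    · intro r a _ ha; rw [map_smul, ha]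
  -- E kills Vf
  have hEVf : ∀ v ∈ Vf, E v = 0 := by
    intro v hv
    rw [hVfdef] at hv
    refine Submodule.span_induction (p := fun x _ => E x = 0) ?_ ?_ ?_ ?_ hv
    · rintro w ⟨t, m, htm, rfl⟩
      rw [hE]
      exact wedge_coord_zero _ 0 (by simp [hπl])
    · exact map_zero E
    · intro a a' _ _ ha ha'; rw [map_add, ha, ha', add_zero]
    · intro r a _ ha; rw [map_smul, ha]; exact smul_zero _
  -- Ψ is the identity on Vf modulo S
  have hΨVf : ∀ v ∈ Vf, v - Ψ v ∈ S := by
    intro v hv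
    rw [hVfdef] at hv
    refine Submodule.span_induction (p := fun x _ => x - Ψ x ∈ S) ?_ ?_ ?_ ?_ hv
    · rintro w ⟨t, m, htm, rfl⟩
      have hcw : c (wedge 3 ![b (Sum.inl t), b (Sum.inr t), b (Sum.inr m)]) =
          L.mkQ (b (Sum.inr m)) := by
        rw [hcv, hxy t t, hyy t m, hyx m t, if_pos rfl, if_neg (Ne.symm htm)]
        simp [zero_zsmul, one_zsmul]
      have hΨw : Ψ (wedge 3 ![b (Sum.inl t), b (Sum.inr t), b (Sum.inr m)]) = uu m := by
        show Φ (jq (c _)) = uu m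
        rw [hcw, hjmk, hπr, hΦr]
      rw [hΨw]
      have hex : ∃ t' : Fin g, t' ≠ m := ⟨t, htm⟩
      have hum : uu m = wedge 3 ![b (Sum.inl hex.choose), b (Sum.inr hex.choose),
          b (Sum.inr m)] := dif_pos hex
      have hsm : hex.choose ≠ m := hex.choose_spec
      by_cases hst : hex.choose = t
      · rw [hum, hst, sub_self]; exact zero_mem S
      · have hmem := hS4 hex.choose t m hst htm hsm
        rw [hum]
        have heq : wedge 3 ![b (Sum.inl t), b (Sum.inr t), b (Sum.inr m)] -
            wedge 3 ![b (Sum.inl hex.choose), b (Sum.inr hex.choose), b (Sum.inr m)] =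
            wedge 3 ![b (Sum.inr hex.choose), b (Sum.inl hex.choose), b (Sum.inr m)] +
            wedge 3 ![b (Sum.inl t), b (Sum.inr t), b (Sum.inr m)] := by
          rw [wedge_swap01 (b (Sum.inl hex.choose)) (b (Sum.inr hex.choose)) (b (Sum.inr m))]
          abel
        rw [heq]
        exact hmem
    · simpa using zero_mem S
    · intro a a' _ _ ha ha'
      simpa [map_add, add_sub_add_comm] using add_mem ha ha'
    · intro r a _ ha
      convert Submodule.smul_mem S r ha using 1; rw [map_smul]; exact (smul_sub r a (Ψ a)).symm
  -- final assembly
  refine le_antisymm ?_ hSker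
  intro w hw
  obtain ⟨a, ha, vf, hvf, rfl⟩ := Submodule.mem_sup.1 (hdec w)
  obtain ⟨s, hs, vy, hvy, rfl⟩ := Submodule.mem_sup.1 ha
  have hw' := hw
  simp only [LinearMap.mem_ker, LinearMap.prod_apply, Function.prod, Prod.mk_eq_zero] at hw'
  have hsk := hSker hs
  simp only [LinearMap.mem_ker, LinearMap.prod_apply, Function.prod, Prod.mk_eq_zero] at hsk
  have hE0 : ∀ z : ⋀[ℤ]^3 H, p z = 0 → E z = 0 := fun z hz => by
    show G (p z) = 0; rw [hz, map_zero]
  have hΨ0 : ∀ z : ⋀[ℤ]^3 H, c z = 0 → Ψ z = 0 := fun z hz => by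
    show Φ (jq (c z)) = 0; rw [hz, map_zero, map_zero]
  have hvy0 : vy = 0 := by
    have h1 : E (s + vy + vf) = 0 := hE0 _ hw'.1
    rw [map_add, map_add, hE0 s hsk.1, hEVy vy hvy, hEVf vf hvf, zero_add, add_zero] at h1
    exact h1
  have hvfS : vf ∈ S := by
    have h2 : Ψ (s + vy + vf) = 0 := hΨ0 _ hw'.2
    rw [map_add, map_add, hΨ0 s hsk.2, hvy0, map_zero, zero_add, zero_add] at h2
    have h3 := hΨVf vf hvf
    rw [h2, sub_zero] at h3
    exact h3
  rw [hvy0, add_zero]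
  exact add_mem hs hvfS
end

section
/- Let g ≥ 2, let H be a free ℤ-module with symplectic basis x_1,…,x_g,y_1,…,y_g and let L ⊆ H be the Lagrangian submodule spanned by x_1,…,x_g. Let p : Λ³H → Λ³(H/L) be the map induced by the projection H → H/L, and let c : Λ³H → H/L be the composition of the contraction h_1 ∧ h_2 ∧ h_3 ↦ (h_1·h_2)h_3 + (h_2·h_3)h_1 + (h_3·h_1)h_2 with the projection H → H/L. Then the ℤ-linear map p ⊕ c : Λ³H → Λ³(H/L) ⊕ H/L is surjective. -/
open ExteriorAlgebra

lemma wedge_zero {M : Type*} [AddCommGroup M] [Module ℤ M] (n : ℕ) (v : Fin n → M)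
    (i : Fin n) (hi : v i = 0) : wedge n v = 0 := by
  apply Subtype.ext
  simp only [wedge]
  show ιMulti ℤ n v = ((0 : ⋀[ℤ]^n M) : ExteriorAlgebra ℤ M)
  rw [ZeroMemClass.coe_zero]
  exact AlternatingMap.map_coord_zero (ιMulti ℤ n (M := M)) (m := v) i hi

/-- For `g ≥ 2`: `H` free with symplectic basis `x_1,…,x_g,y_1,…,y_g` for the intersection
pairing `ω`, `L` the Lagrangian spanned by the `x_i`, `p : Λ³H → Λ³(H/L)` induced by the
projection `H → H/L`, and `c : Λ³H → H/L` the contraction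
`h₁∧h₂∧h₃ ↦ (h₁·h₂)h₃ + (h₂·h₃)h₁ + (h₃·h₁)h₂` followed by the projection.  Then the map
`p ⊕ c : Λ³H → Λ³(H/L) ⊕ H/L` is surjective. -/
theorem p_oplus_c_surjective (g : ℕ) (hg : 2 ≤ g) (H : Type) [AddCommGroup H] [Module ℤ H]
    (b : Module.Basis (Fin g ⊕ Fin g) ℤ H)
    (L : Submodule ℤ H)
    (hL : L = Submodule.span ℤ (Set.range fun i : Fin g => b (Sum.inl i)))
    (ω : H →ₗ[ℤ] H →ₗ[ℤ] ℤ)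
    (hxx : ∀ i j : Fin g, ω (b (Sum.inl i)) (b (Sum.inl j)) = 0)
    (hyy : ∀ i j : Fin g, ω (b (Sum.inr i)) (b (Sum.inr j)) = 0)
    (hxy : ∀ i j : Fin g, ω (b (Sum.inl i)) (b (Sum.inr j)) = if i = j then 1 else 0)
    (hyx : ∀ i j : Fin g, ω (b (Sum.inr i)) (b (Sum.inl j)) = if i = j then -1 else 0)
    (p : (⋀[ℤ]^3 H) →ₗ[ℤ] (⋀[ℤ]^3 (H ⧸ L)))
    (hp : ∀ v : Fin 3 → H, p (wedge 3 v) = wedge 3 (⇑L.mkQ ∘ v))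
    (c : (⋀[ℤ]^3 H) →ₗ[ℤ] H ⧸ L)
    (hc : ∀ v : Fin 3 → H, c (wedge 3 v) =
      L.mkQ ((ω (v 0) (v 1)) • v 2 + (ω (v 1) (v 2)) • v 0 + (ω (v 2) (v 0)) • v 1)) :
    Function.Surjective (p.prod c) := by
  set S := LinearMap.range (p.prod c) with hS
  -- x_i ∈ L
  have hxL : ∀ i : Fin g, b (Sum.inl i) ∈ L := by
    intro i
    rw [hL]
    exact Submodule.subset_span ⟨i, rfl⟩
  have hxQ : ∀ i : Fin g, L.mkQ (b (Sum.inl i)) = 0 := fun i =>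
    (Submodule.Quotient.mk_eq_zero L).2 (hxL i)
  haveI : Nontrivial (Fin g) := Fin.nontrivial_iff_two_le.2 hg
  -- Step A: (0, t) ∈ S for all t
  have stepA : ∀ t : H ⧸ L, ((0 : ⋀[ℤ]^3 (H ⧸ L)), t) ∈ S := by
    have key : ∀ m : Fin g, ((0 : ⋀[ℤ]^3 (H ⧸ L)), L.mkQ (b (Sum.inr m))) ∈ S := by
      intro m
      obtain ⟨j, hj⟩ := exists_ne m
      set v : Fin 3 → H := ![b (Sum.inl j), b (Sum.inr j), b (Sum.inr m)] with hv
      refine ⟨wedge 3 v, ?_⟩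
      have h0 : v 0 = b (Sum.inl j) := rfl
      have h1 : v 1 = b (Sum.inr j) := rfl
      have h2 : v 2 = b (Sum.inr m) := rfl
      have hpv : p (wedge 3 v) = 0 := by
        rw [hp]
        apply wedge_zero _ _ 0
        simp [h0, hxQ j]
      have hcv : c (wedge 3 v) = L.mkQ (b (Sum.inr m)) := by
        rw [hc, h0, h1, h2, hxy, hyy, hyx, if_pos rfl, if_neg hj.symm]
        simp
      simp [LinearMap.prod_apply, hpv, hcv]
    intro t
    obtain ⟨h, rfl⟩ := L.mkQ_surjective t
    have hh : h ∈ Submodule.span ℤ (Set.range ⇑b) := by rw [b.span_eq]; trivial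
    induction hh using Submodule.span_induction with
    | mem z hz =>
        obtain ⟨i, rfl⟩ := hz
        rcases i with i | i
        · rw [hxQ i]
          exact S.zero_mem
        · exact key i
    | zero => simp only [map_zero]; exact S.zero_mem
    | add u v _ _ hu hv => simpa using S.add_mem hu hv
    | smul a u _ hu =>
        have h2 := S.smul_mem a hu
        convert h2 using 2
        · exact (smul_zero a).symm
        · exact (congrArg L.mkQ (int_smul_eq_zsmul ‹Module ℤ H› a u)).trans
            (Submodule.Quotient.mk_smul L a u)
  -- Step B: for every a there is t with (a, t) ∈ S
  have stepB : ∀ a : ⋀[ℤ]^3 (H ⧸ L), ∃ t, (a, t) ∈ S := by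
    intro a
    set T : Submodule ℤ (⋀[ℤ]^3 (H ⧸ L)) :=
      Submodule.map (LinearMap.fst ℤ (⋀[ℤ]^3 (H ⧸ L)) (H ⧸ L)) S with hT
    have haT : a ∈ T := by
      -- push to the exterior algebra
      have hval : (a : ExteriorAlgebra ℤ (H ⧸ L)) ∈
          Submodule.map (⋀[ℤ]^3 (H ⧸ L)).subtype T := by
        have h1 : (a : ExteriorAlgebra ℤ (H ⧸ L)) ∈
            Submodule.span ℤ (Set.range (ιMulti ℤ 3 (M := H ⧸ L))) := by
          rw [ιMulti_span_fixedDegree]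
          exact a.2
        refine Submodule.span_le.2 ?_ h1
        rintro _ ⟨v, rfl⟩
        -- lift v
        have hlift : ∀ i : Fin 3, ∃ h : H, L.mkQ h = v i := fun i =>
          Submodule.mkQ_surjective L (v i)
        choose u hu using hlift
        have huv : ⇑L.mkQ ∘ u = v := funext hu
        refine ⟨wedge 3 v, ⟨(p (wedge 3 u), c (wedge 3 u)), ⟨wedge 3 u, rfl⟩, ?_⟩, rfl⟩
        simp only [LinearMap.fst_apply]
        rw [hp, huv]
      obtain ⟨x, hxT, hxval⟩ := hval
      have : x = a := Subtype.ext hxval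
      rwa [this] at hxT
    obtain ⟨⟨a', t⟩, hmem, ha'⟩ := haT
    simp only [LinearMap.fst_apply] at ha'
    exact ⟨t, ha' ▸ hmem⟩
  -- combine
  rw [← LinearMap.range_eq_top, ← hS, eq_top_iff]
  rintro ⟨a, t⟩ -
  obtain ⟨t', ht'⟩ := stepB a
  have h2 := stepA (t - t')
  have := S.add_mem ht' h2
  simpa using this
end

section
/- Let F be a free group on a generating set {z_i}_{i∈I}, let m ≥ 1, and for each i let c_i ∈ F_m (the m-th lower central series subgroup, with F_1 = F). Let φ : F → F be the endomorphism determined by φ(z_i) = c_i z_i c_i^{-1}. Then for every w ∈ F one has w^{-1} φ(w) ∈ F_{m+1} = [F, F_m]. -/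
open scoped commutatorElement

/-- `F` is the free group on generators `{z_i}_{i ∈ I}`.  Here `lowerCentralSeries F m` is the
paper's `F_{m+1}` (`F_1 = F`, `F_{q+1} = [F, F_q]`), so the hypothesis `c i ∈
lowerCentralSeries F m` says `c_i ∈ F_{m+1}` and the conclusion says
`w⁻¹ φ(w) ∈ F_{m+2} = [F, F_{m+1}]`, for all `m ≥ 0`, i.e. the paper's statement for all
`m ≥ 1`.  `φ` is the endomorphism of `F` determined by `φ(z_i) = c_i z_i c_i⁻¹`. -/
theorem conj_endo_lcs (I : Type) (m : ℕ) (c : I → FreeGroup I)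
    (hc : ∀ i, c i ∈ Subgroup.lowerCentralSeries (⊤ : Subgroup (FreeGroup I)) m)
    (φ : FreeGroup I →* FreeGroup I)
    (hφ : ∀ i, φ (FreeGroup.of i) = c i * FreeGroup.of i * (c i)⁻¹)
    (w : FreeGroup I) :
    w⁻¹ * φ w ∈ Subgroup.lowerCentralSeries (⊤ : Subgroup (FreeGroup I)) (m + 1) := by
  set N := Subgroup.lowerCentralSeries (⊤ : Subgroup (FreeGroup I)) (m + 1) with hN
  have hnorm : N.Normal := by rw [hN]; infer_instance
  induction w using FreeGroup.induction_on with
  | C1 => simpa using N.one_mem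
  | of i =>
      show (FreeGroup.of i)⁻¹ * φ (FreeGroup.of i) ∈ N
      rw [hφ i]
      have h1 : ⁅c i, (FreeGroup.of i)⁻¹⁆ ∈ N := by
        rw [hN, Subgroup.lowerCentralSeries_succ]
        exact Subgroup.commutator_mem_commutator (hc i) (Subgroup.mem_top _)
      have h2 : (⁅c i, (FreeGroup.of i)⁻¹⁆)⁻¹ ∈ N := N.inv_mem h1
      have : (FreeGroup.of i)⁻¹ * (c i * FreeGroup.of i * (c i)⁻¹) =
          (⁅c i, (FreeGroup.of i)⁻¹⁆)⁻¹ := by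
        simp [commutatorElement_def]; group
      rw [this]; exact h2
  | inv_of i h =>
      show (FreeGroup.of i)⁻¹⁻¹ * φ (FreeGroup.of i)⁻¹ ∈ N
      replace h : (FreeGroup.of i)⁻¹ * φ (FreeGroup.of i) ∈ N := h
      rw [map_inv, hφ i] at *
      have := hnorm.conj_mem _ (N.inv_mem h) (FreeGroup.of i)
      have heq : (FreeGroup.of i)⁻¹⁻¹ * (c i * FreeGroup.of i * (c i)⁻¹)⁻¹ =
          FreeGroup.of i * ((FreeGroup.of i)⁻¹ * (c i * FreeGroup.of i * (c i)⁻¹))⁻¹ *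
            (FreeGroup.of i)⁻¹ := by group
      rw [heq]; exact this
  | mul x y hx hy =>
      have h1 := hnorm.conj_mem _ hx y⁻¹
      have heq : (x * y)⁻¹ * φ (x * y) =
          (y⁻¹ * (x⁻¹ * φ x) * y⁻¹⁻¹) * (y⁻¹ * φ y) := by
        rw [map_mul]; group
      rw [heq]; exact N.mul_mem h1 hy
end
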